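/- arXiv:1210.7361 — 2 statements merged into one kernel-verified Lean document; each statement's English description precedes it below -/
import Mathlib

section
/- Let T be a finite tree, let u and v be vertices of T, and let w be any walk in T from u to v. Then for every edge e of T, the number of times w traverses e is congruent modulo 2 to 1 if e lies on the unique path in T from u to v, and congruent to 0 modulo 2 otherwise. -/
open SimpleGraph

lemma walk_parity_aux {V : Type*} [DecidableEq V] (T : SimpleGraph V) (e : Sym2 V) (φ : V → ZMod 2)
    (hφ : ∀ x y, T.Adj x y → φ y = φ x + (if s(x,y) = e then 1 else 0)) :
    ∀ {u v : V} (w : T.Walk u v), (w.edges.count e : ZMod 2) = φ v - φ u := by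
  intro u v w
  induction w with
  | nil => simp
  | cons h t ih =>
    rw [SimpleGraph.Walk.edges_cons, List.count_cons]
    push_cast [apply_ite (Nat.cast : ℕ → ZMod 2)]
    rw [ih, hφ _ _ h]
    simp only [beq_iff_eq]
    ring

/-- In a finite tree, any walk `w` from `u` to `v` traverses each edge
`e` an odd number of times if `e` lies on the unique path from `u` to `v`, and an
even number of times otherwise. -/
theorem stmt_2 {V : Type*} [Fintype V] [DecidableEq V] (T : SimpleGraph V)
    (hT : T.IsTree) (u v : V) (w : T.Walk u v)
    (pth : T.Walk u v) (hpth : pth.IsPath) (e : Sym2 V) (he : e ∈ T.edgeSet) :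
    w.edges.count e % 2 = if e ∈ pth.edges then 1 else 0 := by
  classical
  induction e using Sym2.ind with
  | _ a b =>
  have hab : T.Adj a b := he
  have hbr : T.IsBridge s(a, b) :=
    (isAcyclic_iff_forall_edge_isBridge.mp hT.IsAcyclic) he
  have hnr : ¬(T \ fromEdgeSet {s(a, b)}).Reachable a b := isBridge_iff.mp hbr
  set G' := T \ fromEdgeSet {s(a, b)} with hG'
  set φ : V → ZMod 2 := fun x => if G'.Reachable a x then 0 else 1 with hφdef
  have hφ : ∀ x y, T.Adj x y → φ y = φ x + (if s(x,y) = s(a,b) then 1 else 0) := by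
    intro x y hxy
    by_cases hc : s(x, y) = s(a, b)
    · rw [if_pos hc]
      rw [Sym2.eq_iff] at hc
      rcases hc with ⟨rfl, rfl⟩ | ⟨rfl, rfl⟩
      · simp only [hφdef]
        rw [if_neg hnr, if_pos (Reachable.refl x), zero_add]
      · simp only [hφdef]
        rw [if_pos (Reachable.refl y), if_neg hnr]
        decide
    · rw [if_neg hc, add_zero]
      have hadj : G'.Adj x y := by
        rw [hG']
        simp only [sdiff_adj, fromEdgeSet_adj, Set.mem_singleton_iff]
        exact ⟨hxy, fun h => hc h.1⟩
      have hiff : G'.Reachable a x ↔ G'.Reachable a y :=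
        ⟨fun r => r.trans hadj.reachable, fun r => r.trans hadj.symm.reachable⟩
      simp only [hφdef, hiff]
  have key : ∀ (w' : T.Walk u v), (w'.edges.count s(a, b) : ZMod 2) = φ v - φ u :=
    fun w' => walk_parity_aux T s(a, b) φ hφ w'
  have hmod : w.edges.count s(a, b) % 2 = pth.edges.count s(a, b) % 2 :=
    (ZMod.natCast_eq_natCast_iff _ _ 2).mp (by rw [key w, key pth])
  rw [hmod]
  by_cases hm : s(a, b) ∈ pth.edges
  · rw [if_pos hm, List.count_eq_one_of_mem hpth.edges_nodup hm]
  · rw [if_neg hm, List.count_eq_zero.mpr hm]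
end

section
/- Let T be the spider tree with center vertex c and three legs of length 3 (10 vertices, 9 edges). Then there do not exist two connected subgraphs S1 and S2 of T, each having at most 5 edges, whose edge sets together cover all 9 edges of T. -/
/-- The spider tree with center `none` and three legs of length 3: for each
`i : Fin 3` the leg consists of the vertices `some (i, 0)`, `some (i, 1)`,
`some (i, 2)` (i.e. `v_{i,1}`, `v_{i,2}`, `v_{i,3}`). -/
def spider : SimpleGraph (Option (Fin 3 × Fin 3)) :=
  SimpleGraph.fromEdgeSet
    {e | ∃ i : Fin 3,
      e = s((none : Option (Fin 3 × Fin 3)), some (i, 0)) ∨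
      e = s(some (i, 0), some (i, 1)) ∨
      e = s(some (i, 1), some (i, 2))}

instance : DecidableRel spider.Adj := fun a b =>
  decidable_of_iff
    ((∃ i : Fin 3,
      s(a, b) = s((none : Option (Fin 3 × Fin 3)), some (i, 0)) ∨
      s(a, b) = s(some (i, 0), some (i, 1)) ∨
      s(a, b) = s(some (i, 1), some (i, 2))) ∧ a ≠ b)
    (by rw [spider, SimpleGraph.fromEdgeSet_adj]; rfl)

lemma walk_cross {V : Type*} {G : SimpleGraph V} (P : Set V) :
    ∀ {u v : V}, G.Walk u v → u ∈ P → v ∉ P →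
      ∃ a b, G.Adj a b ∧ a ∈ P ∧ b ∉ P := by
  intro u v w
  induction w with
  | nil => intro h h'; exact absurd h h'
  | @cons u x v h w ih =>
    intro hu hv
    by_cases hx : x ∈ P
    · exact ih hx hv
    · exact ⟨u, x, h, hu, hx⟩

lemma subgraph_cross {V : Type*} {G : SimpleGraph V} {S : G.Subgraph} (hS : S.Connected)
    {u v : V} (hu : u ∈ S.verts) (hv : v ∈ S.verts) (P : Set V)
    (hu' : u ∈ P) (hv' : v ∉ P) :
    ∃ a b, S.Adj a b ∧ a ∈ P ∧ b ∉ P := by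
  obtain ⟨w⟩ := hS.preconnected ⟨u, hu⟩ ⟨v, hv⟩
  obtain ⟨a, b, hab, ha, hb⟩ :=
    walk_cross {x : S.verts | (x : V) ∈ P} w hu' hv'
  exact ⟨a, b, hab, ha, hb⟩

lemma card_six : ∀ i j : Fin 3, i ≠ j →
    ({s(some (i, 1), some (i, 2)), s(some (i, 1), some (i, 0)), s(some (i, 0), none),
      s(some (j, 1), some (j, 2)), s(some (j, 1), some (j, 0)), s(some (j, 0), none)} :
      Finset (Sym2 (Option (Fin 3 × Fin 3)))).card = 6 := by decide

lemma six_edges {S : spider.Subgraph} (hS : S.Connected) {i j : Fin 3} (hij : i ≠ j)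
    (hi : s(some (i, 1), some (i, 2)) ∈ S.edgeSet)
    (hj : s(some (j, 1), some (j, 2)) ∈ S.edgeSet) :
    6 ≤ S.edgeSet.ncard := by
  rw [SimpleGraph.Subgraph.mem_edgeSet] at hi hj
  have hu : (some (i, 2) : Option (Fin 3 × Fin 3)) ∈ S.verts := hi.snd_mem
  have hv : (some (j, 2) : Option (Fin 3 × Fin 3)) ∈ S.verts := hj.snd_mem
  -- facts pinning the crossing edges
  have fact1 : ∀ (k : Fin 3) (a b : Option (Fin 3 × Fin 3)), spider.Adj a b →
      (a = some (k, 1) ∨ a = some (k, 2)) → ¬(b = some (k, 1) ∨ b = some (k, 2)) →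
      a = some (k, 1) ∧ b = some (k, 0) := by decide
  have fact2 : ∀ (k : Fin 3) (a b : Option (Fin 3 × Fin 3)), spider.Adj a b →
      (∃ m : Fin 3, a = some (k, m)) → ¬(∃ m : Fin 3, b = some (k, m)) →
      a = some (k, 0) ∧ b = none := by
    set_option synthInstance.maxHeartbeats 400000 in
    set_option synthInstance.maxSize 1024 in decide
  have key : ∀ (k : Fin 3), (some (k, 2) : Option (Fin 3 × Fin 3)) ∈ S.verts →
      (∃ l : Fin 3, k ≠ l ∧ (some (l, 2) : Option (Fin 3 × Fin 3)) ∈ S.verts) →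
      S.Adj (some (k, 1)) (some (k, 0)) ∧ S.Adj (some (k, 0)) none := by
    intro k hk ⟨l, hkl, hl⟩
    constructor
    · obtain ⟨a, b, hab, ha, hb⟩ := subgraph_cross hS hk hl
        {x | x = some (k, 1) ∨ x = some (k, 2)} (Or.inr rfl)
        (by simp [hkl.symm, Prod.ext_iff])
      obtain ⟨rfl, rfl⟩ := fact1 k a b hab.adj_sub ha hb
      exact hab
    · obtain ⟨a, b, hab, ha, hb⟩ := subgraph_cross hS hk hl
        {x | ∃ m : Fin 3, x = some (k, m)} ⟨2, rfl⟩
        (by simp [hkl.symm, Prod.ext_iff])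
      obtain ⟨rfl, rfl⟩ := fact2 k a b hab.adj_sub ha hb
      exact hab
  obtain ⟨hi1, hi2⟩ := key i hu ⟨j, hij, hv⟩
  obtain ⟨hj1, hj2⟩ := key j hv ⟨i, hij.symm, hu⟩
  -- the six edges
  set F : Finset (Sym2 (Option (Fin 3 × Fin 3))) :=
    {s(some (i, 1), some (i, 2)), s(some (i, 1), some (i, 0)), s(some (i, 0), none),
     s(some (j, 1), some (j, 2)), s(some (j, 1), some (j, 0)), s(some (j, 0), none)} with hF
  have hcard : F.card = 6 := by
    rw [hF]; exact card_six i j hij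
  have hsub : (F : Set (Sym2 (Option (Fin 3 × Fin 3)))) ⊆ S.edgeSet := by
    intro e he
    simp only [hF, Finset.coe_insert, Set.mem_insert_iff, Finset.coe_singleton,
      Set.mem_singleton_iff] at he
    rcases he with rfl | rfl | rfl | rfl | rfl | rfl <;>
      rw [SimpleGraph.Subgraph.mem_edgeSet] <;> assumption
  calc 6 = F.card := hcard.symm
    _ = (F : Set (Sym2 (Option (Fin 3 × Fin 3)))).ncard := (Set.ncard_coe_finset F).symm
    _ ≤ S.edgeSet.ncard := Set.ncard_le_ncard hsub (Set.toFinite _)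

/-- There are no two connected subgraphs of the spider tree, each with
at most 5 edges, whose edge sets together cover all 9 edges of the spider tree. -/
theorem stmt_6 :
    ¬ ∃ S₁ S₂ : spider.Subgraph, S₁.Connected ∧ S₂.Connected ∧
      S₁.edgeSet.ncard ≤ 5 ∧ S₂.edgeSet.ncard ≤ 5 ∧
      S₁.edgeSet ∪ S₂.edgeSet = spider.edgeSet := by
  rintro ⟨S₁, S₂, hc1, hc2, h1, h2, hcov⟩
  have hleaf : ∀ k : Fin 3,
      s(some (k, 1), some (k, 2)) ∈ S₁.edgeSet ∪ S₂.edgeSet := by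
    intro k
    rw [hcov, SimpleGraph.mem_edgeSet]
    revert k; decide
  have bound : ∀ (S : spider.Subgraph), S.Connected → S.edgeSet.ncard ≤ 5 →
      ∀ i j : Fin 3, i ≠ j → s(some (i, 1), some (i, 2)) ∈ S.edgeSet →
      s(some (j, 1), some (j, 2)) ∈ S.edgeSet → False := by
    intro S hc h i j hij hi hj
    have := six_edges hc hij hi hj
    omega
  have h01 : (0 : Fin 3) ≠ 1 := by decide
  have h02 : (0 : Fin 3) ≠ 2 := by decide
  have h12 : (1 : Fin 3) ≠ 2 := by decide
  rcases hleaf 0 with m0 | m0 <;> rcases hleaf 1 with m1 | m1 <;>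
    rcases hleaf 2 with m2 | m2
  · exact bound S₁ hc1 h1 0 1 h01 m0 m1
  · exact bound S₁ hc1 h1 0 1 h01 m0 m1
  · exact bound S₁ hc1 h1 0 2 h02 m0 m2
  · exact bound S₂ hc2 h2 1 2 h12 m1 m2
  · exact bound S₁ hc1 h1 1 2 h12 m1 m2
  · exact bound S₂ hc2 h2 0 2 h02 m0 m2
  · exact bound S₂ hc2 h2 0 1 h01 m0 m1
  · exact bound S₂ hc2 h2 0 1 h01 m0 m1
end
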